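/- Consider N ≥ 1 agents with demands X ∈ ℝ^N satisfying X_i > 0 for all i, weights w ∈ ℝ^N satisfying w_i > 0 for all i, and budget B with 0 < B ≤ Σ_{i=1}^N X_i. Suppose μ > 0 satisfies Σ_{i=1}^N min{X_i, w_i·μ} = B. Then the vector A* defined by A*_i = min{X_i, w_i·μ} is feasible for the Eisenberg–Gale program, and for every feasible vector A one has Σ_{i=1}^N w_i·log A*_i ≥ Σ_{i=1}^N w_i·log A_i. (Correctness of the water-filling solution.) -/

import Mathlib

open Finset

/-- Correctness of the water-filling solution: if `μ > 0` is a water level whose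
water-filling allocation `A*_i = min {X_i, w_i μ}` exactly exhausts the budget `B`,
then `A*` is feasible for the Eisenberg–Gale program and its weighted log objective
dominates that of every feasible allocation. -/
theorem waterfilling_is_maximizer
    (N : ℕ) (hN : 1 ≤ N) (X w : Fin N → ℝ)
    (hX : ∀ i, 0 < X i) (hw : ∀ i, 0 < w i)
    (B : ℝ) (hB : 0 < B) (hBle : B ≤ ∑ i, X i)
    (μ : ℝ) (hμ : 0 < μ)
    (hlevel : ∑ i, min (X i) (w i * μ) = B) :
    (∀ i, 0 < min (X i) (w i * μ)) ∧
    (∀ i, min (X i) (w i * μ) ≤ X i) ∧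
    (∑ i, min (X i) (w i * μ) ≤ B) ∧
    (∀ A : Fin N → ℝ, (∀ i, 0 < A i) → (∀ i, A i ≤ X i) → (∑ i, A i ≤ B) →
      ∑ i, w i * Real.log (A i) ≤ ∑ i, w i * Real.log (min (X i) (w i * μ))) := by
  have hSpos : ∀ i, 0 < min (X i) (w i * μ) :=
    fun i => lt_min (hX i) (mul_pos (hw i) hμ)
  refine ⟨hSpos, fun i => min_le_left _ _, hlevel.le, ?_⟩
  intro A hA hAX hAB
  set S : Fin N → ℝ := fun i => min (X i) (w i * μ) with hS
  have key : ∀ i, w i * Real.log (A i) - w i * Real.log (S i) ≤ (A i - S i) / μ := by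
    intro i
    have hSi := hSpos i
    have hlog : Real.log (A i) - Real.log (S i) ≤ (A i - S i) / S i := by
      have h1 : Real.log (A i / S i) ≤ A i / S i - 1 :=
        Real.log_le_sub_one_of_pos (div_pos (hA i) hSi)
      rw [Real.log_div (hA i).ne' hSi.ne'] at h1
      have : A i / S i - 1 = (A i - S i) / S i := by rw [sub_div, div_self (show S i ≠ 0 from hSi.ne')]
      linarith [this ▸ h1]
    have h2 : w i * (Real.log (A i) - Real.log (S i)) ≤ w i * ((A i - S i) / S i) :=
      mul_le_mul_of_nonneg_left hlog (hw i).le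
    have h3 : w i * ((A i - S i) / S i) ≤ (A i - S i) / μ := by
      rcases le_or_gt (w i * μ) (X i) with hc | hc
      · have hSe : S i = w i * μ := min_eq_right hc
        rw [hSe, mul_div_assoc', div_le_div_iff₀ (mul_pos (hw i) hμ) hμ]
        nlinarith [hw i, hμ]
      · have hSe : S i = X i := min_eq_left hc.le
        have hAS : A i - S i ≤ 0 := by rw [hSe]; linarith [hAX i]
        rw [hSe, mul_div_assoc', div_le_div_iff₀ (hX i) hμ]
        nlinarith [hX i, hμ, hw i, hc, hAX i]
    nlinarith [h2, h3]
  have hsum : ∑ i, (w i * Real.log (A i) - w i * Real.log (S i)) ≤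
      ∑ i, (A i - S i) / μ := Finset.sum_le_sum fun i _ => key i
  have : ∑ i, (A i - S i) / μ = (∑ i, A i - B) / μ := by
    rw [← Finset.sum_div, Finset.sum_sub_distrib, hlevel]
  rw [Finset.sum_sub_distrib, this] at hsum
  have : (∑ i, A i - B) / μ ≤ 0 := div_nonpos_of_nonpos_of_nonneg (by linarith) hμ.le
  linarith
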